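/- arXiv:0904.0328 — 3 statements merged into one kernel-verified Lean document; each statement's English description precedes it below -/
import Mathlib

section
/- For every m ≥ 1, 7·( ((A^(m−1)).mulVec ![0,0,1]) 1 + ((A^(m−1)).mulVec ![0,0,1]) 2 ) = 3·2^m + s(m), where s(m) = −3 if m ≡ 0 (mod 3), s(m) = 1 if m ≡ 1 (mod 3), and s(m) = 2 if m ≡ 2 (mod 3). -/
def A : Matrix (Fin 3) (Fin 3) ℤ := !![0, 1, 0; 0, 0, 1; 2, 1, 1]

def d (n : ℕ) : ℤ := if n % 3 = 0 then -1 else if n % 3 = 1 then -2 else 3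

lemma key (n : ℕ) :
    7 * ((A ^ n).mulVec ![0, 0, 1] 0) = 2 ^ n + d n ∧
    7 * ((A ^ n).mulVec ![0, 0, 1] 1) = 2 ^ (n + 1) + d (n + 1) ∧
    7 * ((A ^ n).mulVec ![0, 0, 1] 2) = 2 ^ (n + 2) + d (n + 2) := by
  induction n with
  | zero => simp [Matrix.mulVec, dotProduct, d]; decide
  | succ n ih =>
    obtain ⟨h0, h1, h2⟩ := ih
    have hs : (A ^ (n + 1)).mulVec ![0, 0, 1] =
        A.mulVec ((A ^ n).mulVec ![0, 0, 1]) := by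
      rw [pow_succ', Matrix.mulVec_mulVec]
    set x := (A ^ n).mulVec ![0, 0, 1] with hx
    have e0 : (A ^ (n + 1)).mulVec ![0, 0, 1] 0 = x 1 := by
      rw [hs]; simp [A, Matrix.mulVec, dotProduct, Fin.sum_univ_three]
    have e1 : (A ^ (n + 1)).mulVec ![0, 0, 1] 1 = x 2 := by
      rw [hs]; simp [A, Matrix.mulVec, dotProduct, Fin.sum_univ_three]
    have e2 : (A ^ (n + 1)).mulVec ![0, 0, 1] 2 = 2 * x 0 + x 1 + x 2 := by
      rw [hs]; simp [A, Matrix.mulVec, dotProduct, Fin.sum_univ_three]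
    refine ⟨by rw [e0]; exact h1, by rw [e1]; exact h2, ?_⟩
    rw [e2]
    have hd : d (n + 1 + 2) = d n := by
      unfold d; omega
    have hp : (2 : ℤ) ^ (n + 1 + 2) = 8 * 2 ^ n := by ring
    have hds : 2 * d n + d (n + 1) + d (n + 2) = d n := by
      unfold d; omega
    have hp1 : (2 : ℤ) ^ (n + 1) = 2 * 2 ^ n := by ring
    have hp2 : (2 : ℤ) ^ (n + 2) = 4 * 2 ^ n := by ring
    rw [hd, hp]
    linarith [h0, h1, h2, hp1, hp2, hds]

theorem count_s17 (m : ℕ) (hm : 1 ≤ m) :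
    7 * (((A ^ (m - 1)).mulVec ![0, 0, 1]) 1 + ((A ^ (m - 1)).mulVec ![0, 0, 1]) 2) =
      3 * 2 ^ m + (if m % 3 = 0 then -3 else if m % 3 = 1 then 1 else 2) := by
  obtain ⟨n, rfl⟩ : ∃ n, m = n + 1 := ⟨m - 1, by omega⟩
  obtain ⟨h0, h1, h2⟩ := key n
  simp only [Nat.add_sub_cancel]
  have hd : d (n + 1) + d (n + 2) =
      (if (n + 1) % 3 = 0 then (-3 : ℤ) else if (n + 1) % 3 = 1 then 1 else 2) := by
    unfold d; omega
  have hp2 : (2 : ℤ) ^ (n + 2) = 2 * 2 ^ (n + 1) := by ring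
  linarith [h1, h2, hd, hp2]
end

section
/- For every m ≥ 1, 7·((B^(m−1)).mulVec ![0,0,0,1]) 3 = 2^m + t(m), where t(m) = −1 if m ≡ 0 (mod 3), t(m) = 5 if m ≡ 1 (mod 3), and t(m) = 3 if m ≡ 2 (mod 3). -/
def B : Matrix (Fin 4) (Fin 4) ℤ :=
  !![0, 0, 0, 1; 0, 1, 1, 0; 2, 1, 0, 0; 0, 0, 1, 1]

lemma key_s9 (k : ℕ) : (7 : ℤ) • ((B ^ k).mulVec ![0, 0, 0, 1]) =
    (2 : ℤ) ^ k • ![1, 2, 2, 2] +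
      (if k % 3 = 0 then ![-1, -2, -2, 5]
       else if k % 3 = 1 then ![5, -4, -4, 3] else ![3, -8, 6, -1]) := by
  induction k with
  | zero =>
      funext i
      fin_cases i <;> simp [Matrix.mulVec]
  | succ n ih =>
      rw [pow_succ', ← Matrix.mulVec_mulVec, ← Matrix.mulVec_smul, ih]
      have h3 : n % 3 = 0 ∨ n % 3 = 1 ∨ n % 3 = 2 := by omega
      rcases h3 with h | h | h
      · have h' : (n + 1) % 3 = 1 := by omega
        simp only [h, h', if_true, if_false]
        norm_num
        funext i
        fin_cases i <;>
          simp [B, Matrix.mulVec, dotProduct, Fin.sum_univ_four] <;> ring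
      · have h' : (n + 1) % 3 = 2 := by omega
        simp only [h, h', if_true, if_false]
        norm_num
        funext i
        fin_cases i <;>
          simp [B, Matrix.mulVec, dotProduct, Fin.sum_univ_four] <;> ring
      · have h' : (n + 1) % 3 = 0 := by omega
        simp only [h, h', if_true, if_false]
        norm_num
        funext i
        fin_cases i <;>
          simp [B, Matrix.mulVec, dotProduct, Fin.sum_univ_four] <;> ring

theorem count_s37_sv1 (m : ℕ) (hm : 1 ≤ m) :
    7 * ((B ^ (m - 1)).mulVec ![0, 0, 0, 1]) 3 =
      2 ^ m + (if m % 3 = 0 then -1 else if m % 3 = 1 then 5 else 3) := by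
  obtain ⟨k, rfl⟩ : ∃ k, m = k + 1 := ⟨m - 1, by omega⟩
  have hk := congrFun (key_s9 k) 3
  simp only [Pi.smul_apply, smul_eq_mul] at hk
  simp only [Nat.add_sub_cancel]
  rw [hk]
  have h3 : k % 3 = 0 ∨ k % 3 = 1 ∨ k % 3 = 2 := by omega
  rcases h3 with h | h | h
  · have h' : (k + 1) % 3 = 1 := by omega
    simp [h, h']; ring
  · have h' : (k + 1) % 3 = 2 := by omega
    simp [h, h']; ring
  · have h' : (k + 1) % 3 = 0 := by omega
    simp [h, h']; ring
end

section
/- Define g : ℕ → ℤ by g m = 0 for m ≤ 2, g 3 = 1, and g m = 2^(m−4) for m ≥ 4; define f : ℕ → ℤ by f m = ∑_{k=0}^{⌊m/3⌋} g (m − 3k); and define c : ℕ → ℤ by c m = ∑_{p=0}^{⌊m/2⌋} f (m − 2p). Then for every m ≥ 1, 21·c m = 2^(m+1) + w'(m), where w'(m) = −2, −4, −8, 5, −11, −1 according as m ≡ 0, 1, 2, 3, 4, 5 (mod 6). -/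
def g (m : ℕ) : ℤ :=
  if m ≤ 2 then 0 else if m = 3 then 1 else 2 ^ (m - 4)

def f (m : ℕ) : ℤ :=
  ∑ k ∈ Finset.range (m / 3 + 1), g (m - 3 * k)

def c (m : ℕ) : ℤ :=
  ∑ p ∈ Finset.range (m / 2 + 1), f (m - 2 * p)

lemma f_succ3 (m : ℕ) : f (m + 3) = f m + g (m + 3) := by
  have h : (m + 3) / 3 + 1 = (m / 3 + 1) + 1 := by omega
  rw [f, h, Finset.sum_range_succ']
  simp only [Nat.mul_succ, mul_zero, Nat.sub_zero]
  rw [f]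
  congr 1
  apply Finset.sum_congr rfl
  intro k _
  congr 1
  omega

lemma c_succ2 (m : ℕ) : c (m + 2) = c m + f (m + 2) := by
  have h : (m + 2) / 2 + 1 = (m / 2 + 1) + 1 := by omega
  rw [c, h, Finset.sum_range_succ']
  simp only [Nat.mul_succ, mul_zero, Nat.sub_zero]
  rw [c]
  congr 1
  apply Finset.sum_congr rfl
  intro k _
  congr 1
  omega

lemma f_form : ∀ m : ℕ, 1 ≤ m →
    7 * f m = 2 ^ (m - 1) +
      (if m % 3 = 0 then 3 else if m % 3 = 1 then -1 else -2) := by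
  intro m
  induction m using Nat.strong_induction_on with
  | _ m ih =>
    match m with
    | 0 => intro h; omega
    | 1 => intro _; decide
    | 2 => intro _; decide
    | 3 => intro _; decide
    | (n + 4) =>
      intro _
      have h := ih (n + 1) (by omega) (by omega)
      have h3 : (n + 4) % 3 = (n + 1) % 3 := by omega
      have hg : g (n + 4) = 2 ^ n := by
        rw [g, if_neg (by omega), if_neg (by omega),
          show (n + 4) - 4 = n from by omega]
      have hstep : f (n + 4) = f (n + 1) + g (n + 4) := f_succ3 (n + 1)
      rw [hstep, hg, h3]
      have h1 : (n + 1 : ℕ) - 1 = n := by omega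
      rw [h1] at h
      have h4 : (n + 4 : ℕ) - 1 = n + 3 := by omega
      rw [h4]
      have h5 : (2 : ℤ) ^ (n + 3) = 8 * 2 ^ n := by rw [pow_add]; ring
      rw [h5]
      linarith

theorem count_c_m_sv1 (m : ℕ) (hm : 1 ≤ m) :
    21 * c m =
      2 ^ (m + 1) + (if m % 6 = 0 then -2 else if m % 6 = 1 then -4 else if m % 6 = 2 then -8
        else if m % 6 = 3 then 5 else if m % 6 = 4 then -11 else -1) := by
  induction m using Nat.strong_induction_on with
  | _ m ih =>
    match m with
    | 1 => decide
    | 2 => decide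
    | (n + 3) =>
      have h := ih (n + 1) (by omega) (by omega)
      have hf := f_form (n + 3) (by omega)
      have hc : c (n + 3) = c (n + 1) + f (n + 3) := c_succ2 (n + 1)
      have e1 : (2 : ℤ) ^ (n + 3 + 1) = 4 * 2 ^ (n + 2) := by
        rw [show n + 3 + 1 = (n + 2) + 2 by ring, pow_add]; ring
      have e2 : (2 : ℤ) ^ (n + 1 + 1) = 2 ^ (n + 2) := by
        rw [show n + 1 + 1 = n + 2 by ring]
      have e3 : (n + 3 : ℕ) - 1 = n + 2 := by omega
      rw [e3] at hf
      rw [e2] at h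
      rw [hc, e1]
      have h6 : n % 6 < 6 := Nat.mod_lt _ (by norm_num)
      interval_cases hn : n % 6
      · rw [show (n + 1) % 6 = 1 from by omega] at h
        rw [show (n + 3) % 3 = 0 from by omega] at hf
        rw [show (n + 3) % 6 = 3 from by omega]
        norm_num at h hf ⊢
        linarith
      · rw [show (n + 1) % 6 = 2 from by omega] at h
        rw [show (n + 3) % 3 = 1 from by omega] at hf
        rw [show (n + 3) % 6 = 4 from by omega]
        norm_num at h hf ⊢
        linarith
      · rw [show (n + 1) % 6 = 3 from by omega] at h
        rw [show (n + 3) % 3 = 2 from by omega] at hf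
        rw [show (n + 3) % 6 = 5 from by omega]
        norm_num at h hf ⊢
        linarith
      · rw [show (n + 1) % 6 = 4 from by omega] at h
        rw [show (n + 3) % 3 = 0 from by omega] at hf
        rw [show (n + 3) % 6 = 0 from by omega]
        norm_num at h hf ⊢
        linarith
      · rw [show (n + 1) % 6 = 5 from by omega] at h
        rw [show (n + 3) % 3 = 1 from by omega] at hf
        rw [show (n + 3) % 6 = 1 from by omega]
        norm_num at h hf ⊢
        linarith
      · rw [show (n + 1) % 6 = 0 from by omega] at h
        rw [show (n + 3) % 3 = 2 from by omega] at hf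
        rw [show (n + 3) % 6 = 2 from by omega]
        norm_num at h hf ⊢
        linarith
end
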